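/- arXiv:2006.08473 — 5 statements merged into one kernel-verified Lean document; each statement's English description precedes it below -/
import Mathlib

section
/- Let f : Fin n → ℝ be ε-far from (1,3,2)-free, i.e., every g : Fin n → ℝ containing no indices i < j < k with g(i) < g(k) < g(j) differs from f in at least ε·n positions. Then there exists a family of at least ε·n/3 pairwise disjoint triples (i,j,k) with i < j < k and f(i) < f(k) < f(j). -/
set_option maxHeartbeats 1000000


/-- A triple (i,j,k) with i < j < k is a (1,3,2)-pattern of f if f i < f k < f j. -/
def Is132 {n : ℕ} (f : Fin n → ℝ) (p : Fin n × Fin n × Fin n) : Prop :=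
  p.1 < p.2.1 ∧ p.2.1 < p.2.2 ∧ f p.1 < f p.2.2 ∧ f p.2.2 < f p.2.1

/-- The index set of a triple. -/
def tripleIdx {n : ℕ} (p : Fin n × Fin n × Fin n) : Finset (Fin n) :=
  {p.1, p.2.1, p.2.2}

theorem stmt0 (n : ℕ) (ε : ℝ) (hε : 0 < ε) (hε1 : ε ≤ 1) (f : Fin n → ℝ)
    (hfar : ∀ g : Fin n → ℝ,
      (¬ ∃ p : Fin n × Fin n × Fin n, Is132 g p) →
      ε * n ≤ (Finset.univ.filter (fun i => f i ≠ g i)).card) :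
    ∃ T : Finset (Fin n × Fin n × Fin n),
      (∀ p ∈ T, Is132 f p) ∧
      (∀ p ∈ T, ∀ q ∈ T, p ≠ q → Disjoint (tripleIdx p) (tripleIdx q)) ∧
      ε * n / 3 ≤ T.card := by
  classical
  set V : Finset (Finset (Fin n × Fin n × Fin n)) :=
    Finset.univ.filter (fun T => (∀ p ∈ T, Is132 f p) ∧
      (∀ p ∈ T, ∀ q ∈ T, p ≠ q → Disjoint (tripleIdx p) (tripleIdx q))) with hV
  have hVne : V.Nonempty := ⟨∅, by simp [hV]⟩
  obtain ⟨T, hTV, hTmax⟩ := V.exists_max_image Finset.card hVne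
  obtain ⟨hT1, hT2⟩ := (Finset.mem_filter.mp hTV).2
  refine ⟨T, hT1, hT2, ?_⟩
  set S : Finset (Fin n) := T.biUnion tripleIdx with hS
  -- card bound
  have hidx : ∀ p : Fin n × Fin n × Fin n, (tripleIdx p).card ≤ 3 := by
    intro p
    refine le_trans (Finset.card_insert_le _ _) ?_
    refine Nat.succ_le_succ (le_trans (Finset.card_insert_le _ _) ?_)
    simp
  have hcardS : S.card ≤ 3 * T.card := by
    refine le_trans (Finset.card_biUnion_le) ?_
    calc ∑ p ∈ T, (tripleIdx p).card ≤ ∑ _p ∈ T, 3 :=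
          Finset.sum_le_sum (fun p _ => hidx p)
      _ = 3 * T.card := by rw [Finset.sum_const, smul_eq_mul, Nat.mul_comm]
  -- maximality: every 132 pattern of f meets S
  have hmax : ∀ p, Is132 f p → ¬ Disjoint (tripleIdx p) S := by
    intro p hp hdisj
    have hpT : p ∉ T := by
      intro hpT
      have hsub : tripleIdx p ⊆ S := Finset.subset_biUnion_of_mem tripleIdx hpT
      have : tripleIdx p = ∅ := by
        have := Finset.disjoint_left.mp hdisj
        ext x; simp only [Finset.notMem_empty, iff_false]
        intro hx; exact this hx (hsub hx)
      simp [tripleIdx] at this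
    have hins : insert p T ∈ V := by
      rw [hV, Finset.mem_filter]
      refine ⟨Finset.mem_univ _, ?_, ?_⟩
      · intro q hq
        rcases Finset.mem_insert.mp hq with h | h
        · exact h ▸ hp
        · exact hT1 q h
      · intro a ha b hb hab
        rcases Finset.mem_insert.mp ha with h | h <;>
          rcases Finset.mem_insert.mp hb with h' | h'
        · exact absurd (h.trans h'.symm) hab
        · subst h
          exact Finset.disjoint_of_subset_right
            (Finset.subset_biUnion_of_mem tripleIdx h') hdisj
        · subst h'
          exact (Finset.disjoint_of_subset_right
            (Finset.subset_biUnion_of_mem tripleIdx h) hdisj).symm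
        · exact hT2 a h b h' hab
    have := hTmax _ hins
    rw [Finset.card_insert_of_notMem hpT] at this
    omega
  -- key bound
  have key : ε * n ≤ (S.card : ℝ) := by
    by_cases hC : (Sᶜ : Finset (Fin n)).Nonempty
    · set C : Finset (Fin n) := Sᶜ with hCdef
      set π : Fin n → Fin n := fun i =>
        if h : ((C.filter (fun c => c ≤ i)).Nonempty)
        then (C.filter (fun c => c ≤ i)).max' h else C.min' hC with hπ
      have hπC : ∀ i, π i ∈ C := by
        intro i
        rw [hπ]
        dsimp only
        split
        · next h => exact (Finset.mem_filter.mp ((C.filter (fun c => c ≤ i)).max'_mem h)).1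
        · exact C.min'_mem hC
      have hπid : ∀ i ∈ C, π i = i := by
        intro i hi
        have hne : ((C.filter (fun c => c ≤ i)).Nonempty) :=
          ⟨i, Finset.mem_filter.mpr ⟨hi, le_refl i⟩⟩
        rw [hπ]
        dsimp only
        rw [dif_pos hne]
        refine le_antisymm ?_ ?_
        · have := (C.filter (fun c => c ≤ i)).max'_mem hne
          exact (Finset.mem_filter.mp this).2
        · exact Finset.le_max' (C.filter (fun c => c ≤ i)) i
            (Finset.mem_filter.mpr ⟨hi, le_refl i⟩)
      have hπmono : ∀ i j : Fin n, i ≤ j → π i ≤ π j := by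
        intro i j hij
        by_cases hi : ((C.filter (fun c => c ≤ i)).Nonempty)
        · have hj : ((C.filter (fun c => c ≤ j)).Nonempty) := by
            obtain ⟨x, hx⟩ := hi
            exact ⟨x, Finset.mem_filter.mpr ⟨(Finset.mem_filter.mp hx).1,
              le_trans (Finset.mem_filter.mp hx).2 hij⟩⟩
          rw [hπ]; dsimp only; rw [dif_pos hi, dif_pos hj]
          refine Finset.max'_le _ _ _ (fun y hy => ?_)
          exact Finset.le_max' (C.filter (fun c => c ≤ j)) y (Finset.mem_filter.mpr
            ⟨(Finset.mem_filter.mp hy).1, le_trans (Finset.mem_filter.mp hy).2 hij⟩)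
        · rw [hπ]; dsimp only; rw [dif_neg hi]
          by_cases hj : ((C.filter (fun c => c ≤ j)).Nonempty)
          · rw [dif_pos hj]
            exact C.min'_le _ (Finset.mem_filter.mp ((C.filter _).max'_mem hj)).1
          · rw [dif_neg hj]
      set g : Fin n → ℝ := fun i => f (π i) with hg
      have hgfree : ¬ ∃ p : Fin n × Fin n × Fin n, Is132 g p := by
        rintro ⟨⟨i, j, k⟩, hij, hjk, h1, h2⟩
        simp only [hg] at h1 h2
        have hmij : π i ≤ π j := hπmono i j (le_of_lt hij)
        have hmjk : π j ≤ π k := hπmono j k (le_of_lt hjk)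
        have hij' : π i < π j := lt_of_le_of_ne hmij (fun h => by
          rw [h] at h1; exact absurd (lt_trans h1 h2) (lt_irrefl _))
        have hjk' : π j < π k := lt_of_le_of_ne hmjk (fun h => by
          rw [h] at h2; exact absurd h2 (lt_irrefl _))
        have hp' : Is132 f (π i, π j, π k) := ⟨hij', hjk', h1, h2⟩
        refine hmax _ hp' ?_
        rw [Finset.disjoint_left]
        intro x hx
        have hxC : x ∈ C := by
          simp only [tripleIdx, Finset.mem_insert, Finset.mem_singleton] at hx
          rcases hx with h | h | h <;> exact h ▸ hπC _
        rw [hCdef, Finset.mem_compl] at hxC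
        exact hxC
      have := hfar g hgfree
      refine le_trans this ?_
      have hsub : (Finset.univ.filter (fun i => f i ≠ g i)) ⊆ S := by
        intro i hi
        simp only [Finset.mem_filter] at hi
        by_contra hiS
        have hiC : i ∈ C := by rw [hCdef, Finset.mem_compl]; exact hiS
        exact hi.2 (by rw [hg]; dsimp only; rw [hπid i hiC])
      exact_mod_cast Finset.card_le_card hsub
    · -- Sᶜ empty: S = univ, use constant g
      have hg : ¬ ∃ p : Fin n × Fin n × Fin n, Is132 (fun _ => (0:ℝ)) p := by
        rintro ⟨p, _, _, h1, h2⟩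
        exact absurd (lt_trans h1 h2) (lt_irrefl _)
      have := hfar _ hg
      refine le_trans this ?_
      have hSuniv : S = Finset.univ := by
        rw [← Finset.compl_empty]
        rw [Finset.not_nonempty_iff_eq_empty] at hC
        rw [← hC, compl_compl]
      have : (Finset.univ.filter (fun i => f i ≠ (0:ℝ))).card ≤ S.card := by
        rw [hSuniv]
        exact Finset.card_le_card (Finset.filter_subset _ _)
      exact_mod_cast this
  have hcast : (S.card : ℝ) ≤ 3 * T.card := by exact_mod_cast hcardS
  linarith
end

section
/- Let π be a permutation of [k] and let f : Fin n → ℝ be ε-far from π-free. Then any maximal family T of pairwise disjoint π-patterns of f satisfies |T| ≥ ε·n/k. -/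
/-- A strictly increasing k-tuple of indices `i` is a π-pattern of `f` if
`π a < π b` implies `f (i a) < f (i b)`. -/
def IsPattern {k n : ℕ} (π : Equiv.Perm (Fin k)) (f : Fin n → ℝ) (i : Fin k → Fin n) : Prop :=
  StrictMono i ∧ ∀ a b : Fin k, π a < π b → f (i a) < f (i b)

/-- Two tuples are disjoint if they share no index. -/
def TuplesDisjoint {k n : ℕ} (i j : Fin k → Fin n) : Prop :=
  ∀ a b : Fin k, i a ≠ j b

theorem stmt1 (k n : ℕ) (π : Equiv.Perm (Fin k)) (ε : ℝ) (hε : 0 < ε) (hε1 : ε ≤ 1)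
    (hk : 0 < k) (f : Fin n → ℝ)
    (hfar : ∀ g : Fin n → ℝ,
      (¬ ∃ i : Fin k → Fin n, IsPattern π g i) →
      ε * n ≤ (Finset.univ.filter (fun x => f x ≠ g x)).card)
    (T : Finset (Fin k → Fin n))
    (hT : ∀ i ∈ T, IsPattern π f i)
    (hdisj : ∀ i ∈ T, ∀ j ∈ T, i ≠ j → TuplesDisjoint i j)
    (hmax : ∀ i : Fin k → Fin n, IsPattern π f i → ∃ j ∈ T, ¬ TuplesDisjoint i j) :
    ε * n / k ≤ T.card := by
  classical
  set E : Finset (Fin n) := T.biUnion (fun t => Finset.image t Finset.univ) with hE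
  have hmemE : ∀ t ∈ T, ∀ b : Fin k, t b ∈ E := by
    intro t ht b
    exact Finset.mem_biUnion.mpr ⟨t, ht, Finset.mem_image.mpr ⟨b, Finset.mem_univ b, rfl⟩⟩
  have hEcard : E.card ≤ T.card * k := by
    calc E.card ≤ ∑ t ∈ T, (Finset.image t Finset.univ).card := Finset.card_biUnion_le
    _ ≤ ∑ _t ∈ T, k := by
        apply Finset.sum_le_sum; intro t _
        calc (Finset.image t Finset.univ).card
            ≤ (Finset.univ : Finset (Fin k)).card := Finset.card_image_le
        _ = k := by simp
    _ = T.card * k := by simp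
  have key : ε * n ≤ (E.card : ℝ) := by
    by_cases hA : (Finset.univ \ E).Nonempty
    · set A : Finset (Fin n) := Finset.univ \ E with hAdef
      have hAE : ∀ x, x ∈ A ↔ x ∉ E := by
        intro x; simp [hAdef]
      -- define p
      set p : Fin n → Fin n := fun x =>
        if h : ((A.filter (· ≤ x)).Nonempty) then (A.filter (· ≤ x)).max' h
        else A.min' hA with hp
      have hpA : ∀ x, p x ∈ A := by
        intro x
        simp only [hp]
        split
        · next h => exact (Finset.mem_filter.mp ((A.filter (· ≤ x)).max'_mem h)).1
        · exact A.min'_mem hA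
      have hpid : ∀ x ∈ A, p x = x := by
        intro x hx
        have hx' : x ∈ A.filter (· ≤ x) := Finset.mem_filter.mpr ⟨hx, le_refl x⟩
        have hne : (A.filter (· ≤ x)).Nonempty := ⟨x, hx'⟩
        simp only [hp, dif_pos hne]
        apply le_antisymm
        · exact (Finset.mem_filter.mp ((A.filter (· ≤ x)).max'_mem hne)).2
        · exact Finset.le_max' _ x hx'
      have hpmono : Monotone p := by
        intro x y hxy
        simp only [hp]
        split
        · next h =>
          have hsub : A.filter (· ≤ x) ⊆ A.filter (· ≤ y) := by
            intro z hz
            have := Finset.mem_filter.mp hz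
            exact Finset.mem_filter.mpr ⟨this.1, le_trans this.2 hxy⟩
          have hne' : (A.filter (· ≤ y)).Nonempty := h.mono hsub
          rw [dif_pos hne']
          exact Finset.max'_subset h hsub
        · split
          · next h' =>
            exact A.min'_le _ (Finset.mem_filter.mp ((A.filter (· ≤ y)).max'_mem h')).1
          · exact le_refl _
      set g : Fin n → ℝ := fun x => f (p x) with hg
      have hgfree : ¬ ∃ i : Fin k → Fin n, IsPattern π g i := by
        rintro ⟨i, hmono, hpat⟩
        have hdist : ∀ a b : Fin k, a ≠ b → g (i a) ≠ g (i b) := by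
          intro a b hab
          have hπ : π a ≠ π b := fun h => hab (π.injective h)
          rcases lt_or_gt_of_ne hπ with h | h
          · exact ne_of_lt (hpat a b h)
          · exact (ne_of_lt (hpat b a h)).symm
        have hj : StrictMono (fun a => p (i a)) := by
          intro a b hab
          have hle : p (i a) ≤ p (i b) := hpmono (le_of_lt (hmono hab))
          rcases lt_or_eq_of_le hle with h | h
          · exact h
          · exact absurd (congrArg f h) (hdist a b (ne_of_lt hab))
        have : IsPattern π f (fun a => p (i a)) := ⟨hj, fun a b h => hpat a b h⟩
        obtain ⟨t, ht, hnd⟩ := hmax _ this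
        apply hnd
        intro a b heq
        have h1 : p (i a) ∈ A := hpA (i a)
        have h2 : t b ∈ E := hmemE t ht b
        rw [show p (i a) = t b from heq] at h1
        exact (hAE (t b)).mp h1 h2
      have hsub : Finset.univ.filter (fun x => f x ≠ g x) ⊆ E := by
        intro x hx
        rw [Finset.mem_filter] at hx
        by_contra hxE
        exact hx.2 (by rw [hg]; simp only; rw [hpid x ((hAE x).mpr hxE)])
      calc ε * n ≤ ((Finset.univ.filter (fun x => f x ≠ g x)).card : ℝ) := hfar g hgfree
      _ ≤ (E.card : ℝ) := by exact_mod_cast Finset.card_le_card hsub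
    · have hEuniv : E = Finset.univ := by
        rw [Finset.not_nonempty_iff_eq_empty, Finset.sdiff_eq_empty_iff_subset] at hA
        exact Finset.eq_univ_of_forall (fun x => hA (Finset.mem_univ x))
      rw [hEuniv, Finset.card_univ, Fintype.card_fin]
      nlinarith [Nat.cast_nonneg (α := ℝ) n]
  rw [div_le_iff₀ (by exact_mod_cast hk : (0:ℝ) < (k:ℝ))]
  calc ε * n ≤ (E.card : ℝ) := key
  _ ≤ (T.card : ℝ) * k := by exact_mod_cast hEcard
end

section
/- Let I be a finite interval of integers and S ⊆ I with |S| ≥ ε·|I| for some ε ∈ (0,1]. Say an element i ∈ S is γ-deserted if there is a subinterval J ⊆ I containing i with |S ∩ J| < γ·|J|. Then for every γ < 1, at most 3γ(1-ε)|I|/(1-γ) elements of S are γ-deserted. -/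
/-- `i ∈ S` is γ-deserted in the interval `Icc a b` if some subinterval `J ⊆ Icc a b`
containing `i` satisfies `|S ∩ J| < γ|J|`. -/
def Deserted (a b : ℤ) (S : Finset ℤ) (γ : ℝ) (i : ℤ) : Prop :=
  ∃ c d : ℤ, Finset.Icc c d ⊆ Finset.Icc a b ∧ i ∈ Finset.Icc c d ∧
    ((S ∩ Finset.Icc c d).card : ℝ) < γ * (Finset.Icc c d).card

open Classical in
lemma stmt5_rec (a b : ℤ) (S : Finset ℤ) (γ : ℝ) (hγ0 : 0 < γ) (hγ1 : γ < 1)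
    (hSsub : S ⊆ Finset.Icc a b) :
    ∀ (n : ℕ) (p e : ℤ), p ≤ e → (b - e).toNat ≤ n →
    (∀ c d : ℤ, Finset.Icc c d ⊆ Finset.Icc a b →
      ((S ∩ Finset.Icc c d).card : ℝ) < γ * (Finset.Icc c d).card → c ≤ p → d ≤ e) →
    (1 - γ) * (((S.filter (fun i => Deserted a b S γ i)) ∩ Finset.Ioc e b).card : ℝ) ≤
      γ * ((((Finset.Icc a b \ S) ∩ Finset.Ioc p b).card : ℝ) +
           (((Finset.Icc a b \ S) ∩ Finset.Ioc e b).card : ℝ)) := by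
  intro n
  induction n with
  | zero =>
    intro p e hpe hme hyp
    have hbe : ¬ e < b := by omega
    rw [Finset.Ioc_eq_empty hbe]
    simp only [Finset.inter_empty, Finset.card_empty, Nat.cast_zero, mul_zero]
    positivity
  | succ n ih =>
    intro p e hpe hme hyp
    set D : Finset ℤ := S.filter (fun i => Deserted a b S γ i) with hD
    by_cases hne : (D ∩ Finset.Ioc e b).Nonempty
    · -- pick the minimal remaining deserted point
      set i : ℤ := (D ∩ Finset.Ioc e b).min' hne with hi
      have himem : i ∈ D ∩ Finset.Ioc e b := Finset.min'_mem _ hne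
      have hiD : i ∈ D := (Finset.mem_inter.1 himem).1
      have hiIoc : i ∈ Finset.Ioc e b := (Finset.mem_inter.1 himem).2
      have hie : e < i := (Finset.mem_Ioc.1 hiIoc).1
      have hib : i ≤ b := (Finset.mem_Ioc.1 hiIoc).2
      have hides : Deserted a b S γ i := (Finset.mem_filter.1 hiD).2
      obtain ⟨c0, d0, hsub0, hmem0, hcard0⟩ := hides
      -- the set of right endpoints of witnesses of i
      set W : Finset ℤ := (Finset.Icc i b).filter (fun d =>
        ∃ c, Finset.Icc c d ⊆ Finset.Icc a b ∧ i ∈ Finset.Icc c d ∧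
          ((S ∩ Finset.Icc c d).card : ℝ) < γ * (Finset.Icc c d).card) with hW
      have hd0W : d0 ∈ W := by
        refine Finset.mem_filter.2 ⟨?_, c0, hsub0, hmem0, hcard0⟩
        have h1 : i ≤ d0 := (Finset.mem_Icc.1 hmem0).2
        have h2 : d0 ≤ b := (Finset.mem_Icc.1 (hsub0 (Finset.mem_Icc.2
          ⟨le_trans (Finset.mem_Icc.1 hmem0).1 (Finset.mem_Icc.1 hmem0).2, le_refl d0⟩))).2
        exact Finset.mem_Icc.2 ⟨h1, h2⟩
      have hWne : W.Nonempty := ⟨d0, hd0W⟩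
      set d : ℤ := W.max' hWne with hd
      have hdW : d ∈ W := Finset.max'_mem _ hWne
      have hdmax : ∀ d' ∈ W, d' ≤ d := fun d' h => Finset.le_max' _ _ h
      obtain ⟨hdIcc, c, hsub, hmem, hcard⟩ := Finset.mem_filter.1 hdW
      have hid : i ≤ d := (Finset.mem_Icc.1 hdIcc).1
      have hdb : d ≤ b := (Finset.mem_Icc.1 hdIcc).2
      have hci : c ≤ i := (Finset.mem_Icc.1 hmem).1
      -- c > p : otherwise hyp forces d ≤ e < i ≤ d
      have hcp : p < c := by
        by_contra h
        have := hyp c d hsub hcard (by omega)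
        omega
      -- split the Ioc's at d
      have hsplitD : D ∩ Finset.Ioc e b = (D ∩ Finset.Ioc e d) ∪ (D ∩ Finset.Ioc d b) := by
        rw [← Finset.inter_union_distrib_left, Finset.Ioc_union_Ioc_eq_Ioc (by omega) hdb]
      set T : Finset ℤ := Finset.Icc a b \ S with hT
      have hsplitT : T ∩ Finset.Ioc p b = (T ∩ Finset.Ioc p d) ∪ (T ∩ Finset.Ioc d b) := by
        rw [← Finset.inter_union_distrib_left, Finset.Ioc_union_Ioc_eq_Ioc (by omega) hdb]
      have hdisj1 : Disjoint (D ∩ Finset.Ioc e d) (D ∩ Finset.Ioc d b) :=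
        Disjoint.mono Finset.inter_subset_right Finset.inter_subset_right
          (by simp only [Finset.disjoint_left, Finset.mem_Ioc]; intro x h1 h2; omega)
      have hdisj2 : Disjoint (T ∩ Finset.Ioc p d) (T ∩ Finset.Ioc d b) :=
        Disjoint.mono Finset.inter_subset_right Finset.inter_subset_right
          (by simp only [Finset.disjoint_left, Finset.mem_Ioc]; intro x h1 h2; omega)
      have hcardD : ((D ∩ Finset.Ioc e b).card : ℝ)
          = (D ∩ Finset.Ioc e d).card + (D ∩ Finset.Ioc d b).card := by
        rw [hsplitD, Finset.card_union_of_disjoint hdisj1]; push_cast; ring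
      have hcardT : ((T ∩ Finset.Ioc p b).card : ℝ)
          = (T ∩ Finset.Ioc p d).card + (T ∩ Finset.Ioc d b).card := by
        rw [hsplitT, Finset.card_union_of_disjoint hdisj2]; push_cast; ring
      -- Claim A : D ∩ Ioc e d ⊆ S ∩ Icc c d
      have hclaimA : D ∩ Finset.Ioc e d ⊆ S ∩ Finset.Icc c d := by
        intro j hj
        have hjD : j ∈ D := (Finset.mem_inter.1 hj).1
        have hjIoc := Finset.mem_Ioc.1 (Finset.mem_inter.1 hj).2
        have hjS : j ∈ S := (Finset.mem_filter.1 hjD).1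
        have hij : i ≤ j := Finset.min'_le _ _ (Finset.mem_inter.2
          ⟨hjD, Finset.mem_Ioc.2 ⟨hjIoc.1, le_trans hjIoc.2 hdb⟩⟩)
        exact Finset.mem_inter.2 ⟨hjS, Finset.mem_Icc.2 ⟨le_trans hci hij, hjIoc.2⟩⟩
      -- first part counting
      have hx1s : ((D ∩ Finset.Ioc e d).card : ℝ) ≤ ((S ∩ Finset.Icc c d).card : ℝ) := by
        exact_mod_cast Finset.card_le_card hclaimA
      have hTcd : ((T ∩ Finset.Icc c d).card : ℝ)
          = ((Finset.Icc c d).card : ℝ) - ((S ∩ Finset.Icc c d).card : ℝ) := by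
        have h1 : T ∩ Finset.Icc c d = Finset.Icc c d \ (S ∩ Finset.Icc c d) := by
          ext x
          simp only [hT, Finset.mem_inter, Finset.mem_sdiff]
          constructor
          · rintro ⟨⟨_, hxS⟩, hx2⟩; exact ⟨hx2, fun h => hxS h.1⟩
          · rintro ⟨hx1, hx2⟩
            exact ⟨⟨hsub hx1, fun h => hx2 ⟨h, hx1⟩⟩, hx1⟩
        rw [h1, Finset.card_sdiff_of_subset Finset.inter_subset_right]
        have := Finset.card_le_card (Finset.inter_subset_right (s₁ := S)
          (s₂ := Finset.Icc c d))
        push_cast [Nat.cast_sub this]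
        ring
      have hstep1 : (1 - γ) * ((D ∩ Finset.Ioc e d).card : ℝ)
          ≤ γ * ((T ∩ Finset.Ioc p d).card : ℝ) := by
        have hsubT : T ∩ Finset.Icc c d ⊆ T ∩ Finset.Ioc p d := by
          apply Finset.inter_subset_inter_left
          intro x hx
          have := Finset.mem_Icc.1 hx
          exact Finset.mem_Ioc.2 ⟨by omega, this.2⟩
        have hle : ((T ∩ Finset.Icc c d).card : ℝ) ≤ ((T ∩ Finset.Ioc p d).card : ℝ) := by
          exact_mod_cast Finset.card_le_card hsubT
        nlinarith [hcard, hx1s, hTcd, hle]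
      -- new hypothesis for the recursive call
      have hyp' : ∀ c' d' : ℤ, Finset.Icc c' d' ⊆ Finset.Icc a b →
          ((S ∩ Finset.Icc c' d').card : ℝ) < γ * (Finset.Icc c' d').card →
          c' ≤ e → d' ≤ d := by
        intro c' d' hsub' hcard' hc'e
        by_cases hd'i : d' < i
        · omega
        · push_neg at hd'i
          have hmem' : i ∈ Finset.Icc c' d' := Finset.mem_Icc.2 ⟨by omega, hd'i⟩
          have hd'b : d' ≤ b := (Finset.mem_Icc.1 (hsub' (Finset.mem_Icc.2
            ⟨by omega, le_refl d'⟩))).2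
          exact hdmax d' (Finset.mem_filter.2 ⟨Finset.mem_Icc.2 ⟨hd'i, hd'b⟩,
            c', hsub', hmem', hcard'⟩)
      have hih := ih e d (by omega) (by omega) hyp'
      rw [hcardD, hcardT]
      calc (1 - γ) * (((D ∩ Finset.Ioc e d).card : ℝ) + ((D ∩ Finset.Ioc d b).card : ℝ))
          = (1 - γ) * ((D ∩ Finset.Ioc e d).card : ℝ)
            + (1 - γ) * ((D ∩ Finset.Ioc d b).card : ℝ) := by ring
        _ ≤ γ * ((T ∩ Finset.Ioc p d).card : ℝ)
            + γ * (((T ∩ Finset.Ioc e b).card : ℝ) + ((T ∩ Finset.Ioc d b).card : ℝ)) :=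
            add_le_add hstep1 hih
        _ = γ * ((((T ∩ Finset.Ioc p d).card : ℝ) + ((T ∩ Finset.Ioc d b).card : ℝ))
            + ((T ∩ Finset.Ioc e b).card : ℝ)) := by ring
    · rw [Finset.not_nonempty_iff_eq_empty] at hne
      rw [hne]
      simp only [Finset.card_empty, Nat.cast_zero, mul_zero]
      positivity

open Classical in
theorem stmt5 (a b : ℤ) (S : Finset ℤ) (ε γ : ℝ) (hε : 0 < ε) (hε1 : ε ≤ 1)
    (hγ0 : 0 < γ) (hγ1 : γ < 1)
    (hSsub : S ⊆ Finset.Icc a b)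
    (hScard : ε * (Finset.Icc a b).card ≤ S.card) :
    ((S.filter (fun i => Deserted a b S γ i)).card : ℝ) ≤
      3 * γ * (1 - ε) * (Finset.Icc a b).card / (1 - γ) := by
  have hyp0 : ∀ c d : ℤ, Finset.Icc c d ⊆ Finset.Icc a b →
      ((S ∩ Finset.Icc c d).card : ℝ) < γ * (Finset.Icc c d).card → c ≤ a - 1 → d ≤ a - 1 := by
    intro c d hsub hcard hc
    by_cases hcd : c ≤ d
    · have : c ∈ Finset.Icc a b := hsub (Finset.mem_Icc.2 ⟨le_refl c, hcd⟩)
      have := (Finset.mem_Icc.1 this).1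
      omega
    · exfalso
      rw [Finset.Icc_eq_empty (by omega)] at hcard
      simp at hcard
  have hrec := stmt5_rec a b S γ hγ0 hγ1 hSsub (b - (a-1)).toNat (a-1) (a-1)
    (le_refl _) (le_refl _) hyp0
  set D : Finset ℤ := S.filter (fun i => Deserted a b S γ i) with hD
  have hDsub : D ⊆ Finset.Icc a b := fun x hx => hSsub (Finset.mem_filter.1 hx).1
  have hDeq : D ∩ Finset.Ioc (a-1) b = D := by
    apply Finset.inter_eq_left.2
    intro x hx
    have := Finset.mem_Icc.1 (hDsub hx)
    exact Finset.mem_Ioc.2 ⟨by omega, this.2⟩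
  set T : Finset ℤ := Finset.Icc a b \ S with hT
  have hTeq : T ∩ Finset.Ioc (a-1) b = T := by
    apply Finset.inter_eq_left.2
    intro x hx
    have := Finset.mem_Icc.1 ((Finset.mem_sdiff.1 hx).1)
    exact Finset.mem_Ioc.2 ⟨by omega, this.2⟩
  rw [hDeq, hTeq] at hrec
  -- |T| ≤ (1-ε) n
  have hTcard : (T.card : ℝ) = ((Finset.Icc a b).card : ℝ) - (S.card : ℝ) := by
    rw [hT, Finset.card_sdiff_of_subset hSsub]
    push_cast [Nat.cast_sub (Finset.card_le_card hSsub)]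
    ring
  have hTle : (T.card : ℝ) ≤ (1 - ε) * ((Finset.Icc a b).card : ℝ) := by
    rw [hTcard]; nlinarith
  have hT0 : (0:ℝ) ≤ (T.card : ℝ) := Nat.cast_nonneg _
  rw [le_div_iff₀ (by linarith : (0:ℝ) < 1 - γ)]
  nlinarith [hrec, hTle, hT0, mul_le_mul_of_nonneg_left hTle (le_of_lt hγ0)]
end

section
/- Let f : Fin n → ℝ be ε-far from (1,2)-free (i.e., from non-decreasing-pattern-free, meaning every g with no i < j, g(i) < g(j) differs from f on ≥ ε·n points). Then f contains at least ε·n/2 pairwise disjoint pairs (i,j) with i < j and f(i) < f(j). -/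
theorem stmt11 (n : ℕ) (ε : ℝ) (hε : 0 < ε) (hε1 : ε ≤ 1) (f : Fin n → ℝ)
    (hfar : ∀ g : Fin n → ℝ,
      (¬ ∃ i j : Fin n, i < j ∧ g i < g j) →
      ε * n ≤ (Finset.univ.filter (fun x => f x ≠ g x)).card) :
    ∃ T : Finset (Fin n × Fin n),
      (∀ p ∈ T, p.1 < p.2 ∧ f p.1 < f p.2) ∧
      (∀ p ∈ T, ∀ q ∈ T, p ≠ q →
        Disjoint ({p.1, p.2} : Finset (Fin n)) {q.1, q.2}) ∧
      ε * n / 2 ≤ T.card := by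
  classical
  set V : Finset (Finset (Fin n × Fin n)) := Finset.univ.filter
    (fun T => (∀ p ∈ T, p.1 < p.2 ∧ f p.1 < f p.2) ∧
      ∀ p ∈ T, ∀ q ∈ T, p ≠ q →
        Disjoint ({p.1, p.2} : Finset (Fin n)) {q.1, q.2}) with hV
  have hVne : (∅ : Finset (Fin n × Fin n)) ∈ V := by simp [hV]
  obtain ⟨T, hTV, hTmax⟩ := V.exists_max_image Finset.card ⟨∅, hVne⟩
  rw [hV, Finset.mem_filter] at hTV
  obtain ⟨-, hT1, hT2⟩ := hTV
  refine ⟨T, hT1, hT2, ?_⟩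
  rcases Nat.eq_zero_or_pos n with hn | hn
  · subst hn
    simp only [Nat.cast_zero, mul_zero, zero_div]
    positivity
  haveI : Nonempty (Fin n) := ⟨⟨0, hn⟩⟩
  set S : Finset (Fin n) := T.biUnion (fun p => ({p.1, p.2} : Finset (Fin n))) with hS
  have hmemS : ∀ p ∈ T, p.1 ∈ S ∧ p.2 ∈ S := by
    intro p hp
    constructor <;> exact Finset.mem_biUnion.mpr ⟨p, hp, by simp⟩
  have hcardS : S.card = 2 * T.card := by
    rw [hS, Finset.card_biUnion hT2]
    rw [Finset.sum_congr rfl (fun p hp => Finset.card_pair (ne_of_lt (hT1 p hp).1))]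
    simp [mul_comm]
  -- no increasing pair outside S
  have hcomp : ∀ i j : Fin n, i ∉ S → j ∉ S → i < j → f j ≤ f i := by
    intro i j hi hj hij
    by_contra h
    push_neg at h
    have hnotmem : (i, j) ∉ T := fun hm => hi (hmemS _ hm).1
    have hins : insert (i, j) T ∈ V := by
      rw [hV, Finset.mem_filter]
      refine ⟨Finset.mem_univ _, ?_, ?_⟩
      · intro p hp
        rcases Finset.mem_insert.mp hp with rfl | hp
        · exact ⟨hij, h⟩
        · exact hT1 p hp
      · intro p hp q hq hpq
        have key : ∀ r ∈ T, Disjoint ({i, j} : Finset (Fin n)) {r.1, r.2} := by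
          intro r hr
          rw [Finset.disjoint_left]
          intro a ha ha'
          have haS : a ∈ S := Finset.mem_biUnion.mpr ⟨r, hr, ha'⟩
          rcases Finset.mem_insert.mp ha with rfl | ha
          · exact hi haS
          · exact hj (by rwa [Finset.mem_singleton.mp ha] at haS) |>.elim
        rcases Finset.mem_insert.mp hp with rfl | hp <;>
          rcases Finset.mem_insert.mp hq with rfl | hq
        · exact absurd rfl hpq
        · exact key q hq
        · exact (key p hp).symm
        · exact hT2 p hp q hq hpq
    have := hTmax _ hins
    rw [Finset.card_insert_of_notMem hnotmem] at this
    omega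
  -- construct the decreasing g
  set M : ℝ := ((Finset.univ.image f).max' (by simp)) + 1 with hM
  set P : Fin n → Finset (Fin n) :=
    fun x => Finset.univ.filter (fun y => y ∉ S ∧ y ≤ x) with hP
  set g : Fin n → ℝ := fun x =>
    if h : ((P x).image f).Nonempty then ((P x).image f).min' h else M with hg
  have hle_max : ∀ x : Fin n, f x ≤ M - 1 := by
    intro x
    rw [hM]
    simpa using Finset.le_max' _ (f x) (Finset.mem_image_of_mem f (Finset.mem_univ x))
  have hgfix : ∀ x : Fin n, x ∉ S → g x = f x := by
    intro x hx
    have hxP : x ∈ P x := by simp [hP, hx]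
    have hne : ((P x).image f).Nonempty := ⟨f x, Finset.mem_image_of_mem f hxP⟩
    rw [hg]
    simp only [dif_pos hne]
    apply le_antisymm
    · exact Finset.min'_le _ _ (Finset.mem_image_of_mem f hxP)
    · apply Finset.le_min'
      intro y hy
      obtain ⟨z, hz, rfl⟩ := Finset.mem_image.mp hy
      simp only [hP, Finset.mem_filter] at hz
      obtain ⟨-, hzS, hzx⟩ := hz
      rcases lt_or_eq_of_le hzx with hlt | rfl
      · exact hcomp z x hzS hx hlt
      · exact le_refl _
  have hgdec : ¬ ∃ i j : Fin n, i < j ∧ g i < g j := by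
    rintro ⟨i, j, hij, hlt⟩
    have hsub : P i ⊆ P j := by
      intro y hy
      simp only [hP, Finset.mem_filter] at hy ⊢
      exact ⟨hy.1, hy.2.1, le_trans hy.2.2 (le_of_lt hij)⟩
    by_cases hi : ((P i).image f).Nonempty
    · have hj : ((P j).image f).Nonempty := hi.mono (Finset.image_subset_image hsub)
      rw [hg] at hlt
      simp only [dif_pos hi, dif_pos hj] at hlt
      have hmem : ((P i).image f).min' hi ∈ (P j).image f :=
        Finset.image_subset_image hsub (Finset.min'_mem _ hi)
      exact absurd (Finset.min'_le _ _ hmem) (not_le.mpr hlt)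
    · have hgi : g i = M := by rw [hg]; simp only [dif_neg hi]
      have hgj : g j ≤ M := by
        rw [hg]
        by_cases hj : ((P j).image f).Nonempty
        · simp only [dif_pos hj]
          obtain ⟨y, hy⟩ := hj
          obtain ⟨z, hz, rfl⟩ := Finset.mem_image.mp hy
          calc ((P j).image f).min' _ ≤ f z := Finset.min'_le _ _ hy
            _ ≤ M - 1 := hle_max z
            _ ≤ M := by linarith
        · simp only [dif_neg hj]
          exact le_refl M
      rw [hgi] at hlt
      exact absurd hgj (not_le.mpr hlt)
  have hbound := hfar g hgdec
  have hsubS : (Finset.univ.filter (fun x => f x ≠ g x)) ⊆ S := by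
    intro x hx
    simp only [Finset.mem_filter] at hx
    by_contra hxS
    exact hx.2 (hgfix x hxS).symm
  have hcard := Finset.card_le_card hsubS
  rw [hcardS] at hcard
  have : ε * n ≤ 2 * T.card := by
    calc ε * n ≤ ((Finset.univ.filter (fun x => f x ≠ g x)).card : ℝ) := hbound
      _ ≤ ((2 * T.card : ℕ) : ℝ) := by exact_mod_cast hcard
      _ = 2 * T.card := by push_cast; ring
  linarith
end

section
/- Let f : Fin n → ℝ and suppose T₀ is a finite family of pairwise disjoint (1,3,2)-patterns of f. Run the greedy procedure that repeatedly takes the maximum unused index k ∈ E(T₀), then the maximum unused j such that some unused i makes (i,j,k) a (1,3,2)-pattern, then the maximum such i, adding (i,j,k) when possible. Then the resulting family T satisfies |T| ≥ |T₀|/3. -/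
open Classical in
/-- The greedy right-to-left procedure: repeatedly take the maximum unused index `k`,
then the maximum unused `j` for which some unused `i` makes `(i,j,k)` a (1,3,2)-pattern
of `f`, then the maximum such `i`, adding `(i,j,k)` when possible. `avail` is the set
of still-unused indices of `E(T₀)`. -/
noncomputable def greedy132 {n : ℕ} (f : Fin n → ℝ) (avail : Finset (Fin n)) :
    Finset (Fin n × Fin n × Fin n) :=
  if h : avail.Nonempty then
    let k := avail.max' h
    let S := avail.filter fun j => j < k ∧ ∃ i ∈ avail, i < j ∧ f i < f k ∧ f k < f j
    if hS : S.Nonempty then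
      let j := S.max' hS
      let M := avail.filter fun i => i < j ∧ f i < f k ∧ f k < f j
      if hM : M.Nonempty then
        let i := M.max' hM
        insert (i, j, k) (greedy132 f (((avail.erase k).erase j).erase i))
      else greedy132 f (avail.erase k)
    else greedy132 f (avail.erase k)
  else ∅
termination_by avail.card
decreasing_by
  · calc ((((avail.erase (avail.max' h)).erase _).erase _).card)
        ≤ ((avail.erase (avail.max' h)).erase _).card := Finset.card_erase_le
      _ ≤ (avail.erase (avail.max' h)).card := Finset.card_erase_le
      _ < avail.card := Finset.card_erase_lt_of_mem (avail.max'_mem h)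
  · exact Finset.card_erase_lt_of_mem (avail.max'_mem h)
  · exact Finset.card_erase_lt_of_mem (avail.max'_mem h)

open Classical in
lemma greedy_hits {n : ℕ} (f : Fin n → ℝ) (avail : Finset (Fin n)) :
    ∀ p : Fin n × Fin n × Fin n,
      p.1 < p.2.1 → p.2.1 < p.2.2 → f p.1 < f p.2.2 → f p.2.2 < f p.2.1 →
      p.1 ∈ avail → p.2.1 ∈ avail → p.2.2 ∈ avail →
      ∃ x ∈ tripleIdx p, x ∈ (greedy132 f avail).biUnion tripleIdx := by
  induction avail using Finset.strongInduction with
  | _ avail ih =>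
  intro p h12 h23 hf1 hf2 ha hb hc
  have hne : avail.Nonempty := ⟨p.2.2, hc⟩
  rw [greedy132, dif_pos hne]
  show ∃ x ∈ tripleIdx p,
    x ∈
      (if hS : (Finset.filter (fun j => j < avail.max' hne ∧ ∃ i ∈ avail, i < j ∧ f i < f (avail.max' hne) ∧ f (avail.max' hne) < f j) avail).Nonempty then
          if hM : (Finset.filter (fun i => i < (Finset.filter (fun j => j < avail.max' hne ∧ ∃ i ∈ avail, i < j ∧ f i < f (avail.max' hne) ∧ f (avail.max' hne) < f j) avail).max' hS ∧ f i < f (avail.max' hne) ∧ f (avail.max' hne) < f ((Finset.filter (fun j => j < avail.max' hne ∧ ∃ i ∈ avail, i < j ∧ f i < f (avail.max' hne) ∧ f (avail.max' hne) < f j) avail).max' hS)) avail).Nonempty then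
            insert ((Finset.filter (fun i => i < (Finset.filter (fun j => j < avail.max' hne ∧ ∃ i ∈ avail, i < j ∧ f i < f (avail.max' hne) ∧ f (avail.max' hne) < f j) avail).max' hS ∧ f i < f (avail.max' hne) ∧ f (avail.max' hne) < f ((Finset.filter (fun j => j < avail.max' hne ∧ ∃ i ∈ avail, i < j ∧ f i < f (avail.max' hne) ∧ f (avail.max' hne) < f j) avail).max' hS)) avail).max' hM, (Finset.filter (fun j => j < avail.max' hne ∧ ∃ i ∈ avail, i < j ∧ f i < f (avail.max' hne) ∧ f (avail.max' hne) < f j) avail).max' hS, avail.max' hne)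
              (greedy132 f (((avail.erase (avail.max' hne)).erase ((Finset.filter (fun j => j < avail.max' hne ∧ ∃ i ∈ avail, i < j ∧ f i < f (avail.max' hne) ∧ f (avail.max' hne) < f j) avail).max' hS)).erase ((Finset.filter (fun i => i < (Finset.filter (fun j => j < avail.max' hne ∧ ∃ i ∈ avail, i < j ∧ f i < f (avail.max' hne) ∧ f (avail.max' hne) < f j) avail).max' hS ∧ f i < f (avail.max' hne) ∧ f (avail.max' hne) < f ((Finset.filter (fun j => j < avail.max' hne ∧ ∃ i ∈ avail, i < j ∧ f i < f (avail.max' hne) ∧ f (avail.max' hne) < f j) avail).max' hS)) avail).max' hM)))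
          else greedy132 f (avail.erase (avail.max' hne))
        else greedy132 f (avail.erase (avail.max' hne))).biUnion
        tripleIdx
  set k := avail.max' hne with hkdef
  set S := Finset.filter (fun j => j < k ∧ ∃ i ∈ avail, i < j ∧ f i < f k ∧ f k < f j) avail with hSdef
  have hkmax : ∀ x ∈ avail, x ≤ k := fun x hx => Finset.le_max' _ _ hx
  by_cases hkp : k = p.2.2
  · -- k is the top of p; triple branch must fire and k is hit
    have hbS : p.2.1 ∈ S := by
      rw [hSdef, Finset.mem_filter]
      exact ⟨hb, hkp ▸ h23, ⟨p.1, ha, h12, hkp ▸ hf1, hkp ▸ hf2⟩⟩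
    have hS : S.Nonempty := ⟨_, hbS⟩
    rw [dif_pos hS]
    set j := S.max' hS with hjdef
    have hjS : j ∈ S := S.max'_mem hS
    rw [hSdef, Finset.mem_filter] at hjS
    obtain ⟨hjav, hjk, i₀, hi₀av, hi₀j, hfi₀, hfkj⟩ := hjS
    set M := Finset.filter (fun i => i < j ∧ f i < f k ∧ f k < f j) avail with hMdef
    have hM : M.Nonempty := ⟨i₀, by rw [hMdef, Finset.mem_filter]; exact ⟨hi₀av, hi₀j, hfi₀, hfkj⟩⟩
    rw [dif_pos hM]
    refine ⟨p.2.2, by simp [tripleIdx], ?_⟩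
    rw [Finset.mem_biUnion]
    exact ⟨_, Finset.mem_insert_self _ _, by simp [tripleIdx, ← hkp]⟩
  · -- k is not in p at all
    have hck : p.2.2 < k := lt_of_le_of_ne (hkmax _ hc) (fun h => hkp h.symm)
    have hbk : p.2.1 < k := h23.trans hck
    have hak : p.1 < k := h12.trans hbk
    have hssub : avail.erase k ⊂ avail := Finset.erase_ssubset (avail.max'_mem hne)
    by_cases hS : S.Nonempty
    · rw [dif_pos hS]
      set j := S.max' hS with hjdef
      set M := Finset.filter (fun i => i < j ∧ f i < f k ∧ f k < f j) avail with hMdef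
      by_cases hM : M.Nonempty
      · rw [dif_pos hM]
        set i := M.max' hM with hidef
        by_cases hhit : p.1 = i ∨ p.1 = j ∨ p.2.1 = i ∨ p.2.1 = j ∨ p.2.2 = i ∨ p.2.2 = j
        · -- some coordinate of p is used by the new triple
          have : ∃ x ∈ tripleIdx p, x ∈ tripleIdx (i, j, k) := by
            rcases hhit with h|h|h|h|h|h
            · exact ⟨p.1, by simp [tripleIdx], by simp [tripleIdx, h]⟩
            · exact ⟨p.1, by simp [tripleIdx], by simp [tripleIdx, h]⟩
            · exact ⟨p.2.1, by simp [tripleIdx], by simp [tripleIdx, h]⟩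
            · exact ⟨p.2.1, by simp [tripleIdx], by simp [tripleIdx, h]⟩
            · exact ⟨p.2.2, by simp [tripleIdx], by simp [tripleIdx, h]⟩
            · exact ⟨p.2.2, by simp [tripleIdx], by simp [tripleIdx, h]⟩
          obtain ⟨x, hx1, hx2⟩ := this
          refine ⟨x, hx1, ?_⟩
          rw [Finset.mem_biUnion]
          exact ⟨_, Finset.mem_insert_self _ _, hx2⟩
        · push_neg at hhit
          obtain ⟨n1, n2, n3, n4, n5, n6⟩ := hhit
          have hsub : ((avail.erase k).erase j).erase i ⊂ avail :=
            Finset.ssubset_of_subset_of_ssubset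
              ((Finset.erase_subset _ _).trans (Finset.erase_subset _ _)) hssub
          have hmem : ∀ x ∈ avail, x ≠ i → x ≠ j → x ≠ k →
              x ∈ ((avail.erase k).erase j).erase i := by
            intro x hx h1 h2 h3
            exact Finset.mem_erase.mpr ⟨h1, Finset.mem_erase.mpr ⟨h2, Finset.mem_erase.mpr ⟨h3, hx⟩⟩⟩
          obtain ⟨x, hx1, hx2⟩ := ih _ hsub p h12 h23 hf1 hf2
            (hmem _ ha n1 n2 hak.ne) (hmem _ hb n3 n4 hbk.ne) (hmem _ hc n5 n6 hck.ne)
          refine ⟨x, hx1, ?_⟩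
          rw [Finset.mem_biUnion] at hx2 ⊢
          obtain ⟨t, ht1, ht2⟩ := hx2
          exact ⟨t, Finset.mem_insert_of_mem ht1, ht2⟩
      · rw [dif_neg hM]
        have hmem : ∀ x ∈ avail, x ≠ k → x ∈ avail.erase k := fun x hx h =>
          Finset.mem_erase.mpr ⟨h, hx⟩
        exact ih _ hssub p h12 h23 hf1 hf2 (hmem _ ha hak.ne) (hmem _ hb hbk.ne)
          (hmem _ hc hck.ne)
    · rw [dif_neg hS]
      have hmem : ∀ x ∈ avail, x ≠ k → x ∈ avail.erase k := fun x hx h =>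
        Finset.mem_erase.mpr ⟨h, hx⟩
      exact ih _ hssub p h12 h23 hf1 hf2 (hmem _ ha hak.ne) (hmem _ hb hbk.ne)
        (hmem _ hc hck.ne)

theorem stmt16 (n : ℕ) (f : Fin n → ℝ) (T₀ : Finset (Fin n × Fin n × Fin n))
    (hpat : ∀ p ∈ T₀, p.1 < p.2.1 ∧ p.2.1 < p.2.2 ∧ f p.1 < f p.2.2 ∧ f p.2.2 < f p.2.1)
    (hdisj : ∀ p ∈ T₀, ∀ q ∈ T₀, p ≠ q → Disjoint (tripleIdx p) (tripleIdx q)) :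
    (T₀.card : ℝ) / 3 ≤ (greedy132 f (T₀.biUnion tripleIdx)).card := by
  classical
  set T := greedy132 f (T₀.biUnion tripleIdx) with hT
  set E := T.biUnion tripleIdx with hE
  have key : ∀ p ∈ T₀, ∃ x ∈ tripleIdx p, x ∈ E := by
    intro p hp
    obtain ⟨h1, h2, h3, h4⟩ := hpat p hp
    have hmem : ∀ x ∈ tripleIdx p, x ∈ T₀.biUnion tripleIdx := fun x hx =>
      Finset.mem_biUnion.mpr ⟨p, hp, hx⟩
    exact greedy_hits f _ p h1 h2 h3 h4
      (hmem _ (by simp [tripleIdx])) (hmem _ (by simp [tripleIdx])) (hmem _ (by simp [tripleIdx]))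
  -- injection from T₀ into E
  have hcard1 : T₀.card ≤ E.card := by
    set g : (Fin n × Fin n × Fin n) → Fin n := fun p =>
      if h : ∃ x ∈ tripleIdx p, x ∈ E then h.choose else p.1 with hg
    apply Finset.card_le_card_of_injOn g
    · intro p hp
      rw [hg]
      simp only [dif_pos (key p hp)]
      exact (key p hp).choose_spec.2
    · intro p hp q hq hpq
      by_contra hne
      have hgp : g p ∈ tripleIdx p := by
        rw [hg]; simp only [dif_pos (key p hp)]; exact (key p hp).choose_spec.1
      have hgq : g q ∈ tripleIdx q := by
        rw [hg]; simp only [dif_pos (key q hq)]; exact (key q hq).choose_spec.1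
      have := Finset.disjoint_left.mp (hdisj p hp q hq hne) hgp
      rw [hpq] at this
      exact this hgq
  have hcard2 : E.card ≤ 3 * T.card := by
    calc E.card ≤ ∑ p ∈ T, (tripleIdx p).card := Finset.card_biUnion_le
      _ ≤ ∑ _p ∈ T, 3 := Finset.sum_le_sum (fun p _ => by
          calc (tripleIdx p).card ≤ ({p.2.1, p.2.2} : Finset (Fin n)).card + 1 :=
                Finset.card_insert_le _ _
            _ ≤ (({p.2.2} : Finset (Fin n)).card + 1) + 1 := by
                exact Nat.add_le_add_right (Finset.card_insert_le _ _) 1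
            _ = 3 := by simp)
      _ = 3 * T.card := by rw [Finset.sum_const, smul_eq_mul, mul_comm]
  have : (T₀.card : ℝ) ≤ 3 * T.card := by
    have := hcard1.trans hcard2
    exact_mod_cast this
  linarith
end
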